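/- Let O be a discrete valuation ring with uniformizer π, and suppose π = π̂² for some π̂ in a quadratic extension O' of O (i.e. O' is a DVR with uniformizer π̂ and π̂² = π). In the ring A = O'[X,Y]/(XY − π), the ideal I = (X, π̂) is not a principal ideal. -/

import Mathlib

open MvPolynomial

/-- Auxiliary: in `(O/π²)[T]` the ideal `(T, π)` is not principal, for `π` prime. -/
lemma aux_not_principal {O : Type*} [CommRing O] [IsDomain O]
    (πh : O) (hπ : Prime πh) :
    ¬ (Ideal.span ({Polynomial.X,
        Polynomial.C (Ideal.Quotient.mk (Ideal.span {πh ^ 2}) πh)} :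
        Set (Polynomial (O ⧸ Ideal.span {πh ^ 2})))).IsPrincipal := by
  set R := O ⧸ Ideal.span {πh ^ 2} with hR
  set c : R := Ideal.Quotient.mk (Ideal.span {πh ^ 2}) πh with hc
  -- the residue field map ρ : R → O/(πh)
  have hle : Ideal.span {πh ^ 2} ≤ Ideal.span ({πh} : Set O) := by
    rw [Ideal.span_singleton_le_span_singleton]
    exact ⟨πh, sq πh⟩
  set ρ : R →+* O ⧸ Ideal.span ({πh} : Set O) :=
    Ideal.Quotient.lift (Ideal.span {πh ^ 2}) (Ideal.Quotient.mk _)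
      (fun a ha => Ideal.Quotient.eq_zero_iff_mem.mpr (hle ha)) with hρ
  have hρmk : ∀ a : O, ρ (Ideal.Quotient.mk _ a) = Ideal.Quotient.mk _ a := fun a => rfl
  have hkprime : (Ideal.span ({πh} : Set O)).IsPrime :=
    (Ideal.span_singleton_prime hπ.ne_zero).mpr hπ
  have hknontriv : Nontrivial (O ⧸ Ideal.span ({πh} : Set O)) :=
    Ideal.Quotient.nontrivial_iff.mpr (by
      rw [Ne, Ideal.span_singleton_eq_top]; exact hπ.not_isUnit)
  have hρc : ρ c = 0 := by
    rw [hc, hρmk, Ideal.Quotient.eq_zero_iff_mem]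
    exact Ideal.mem_span_singleton_self πh
  -- kernel of ρ is (c)
  have hker : ∀ x : R, ρ x = 0 → c ∣ x := by
    intro x hx
    obtain ⟨a, rfl⟩ := Ideal.Quotient.mk_surjective x
    rw [hρmk, Ideal.Quotient.eq_zero_iff_mem, Ideal.mem_span_singleton] at hx
    obtain ⟨b, rfl⟩ := hx
    exact ⟨Ideal.Quotient.mk _ b, by rw [hc, ← map_mul]⟩
  -- annihilator of c is (c)
  have hann : ∀ x : R, x * c = 0 → c ∣ x := by
    intro x hx
    obtain ⟨a, rfl⟩ := Ideal.Quotient.mk_surjective x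
    rw [hc, ← map_mul, Ideal.Quotient.eq_zero_iff_mem, Ideal.mem_span_singleton,
      sq] at hx
    have : πh ∣ a := (mul_dvd_mul_iff_right hπ.ne_zero).mp hx
    obtain ⟨b, rfl⟩ := this
    exact ⟨Ideal.Quotient.mk _ b, by rw [hc, ← map_mul]⟩
  rintro ⟨g, hg⟩
  rw [Ideal.submodule_span_eq] at hg
  haveI := hkprime
  -- g divides X and C c, and g lies in the ideal
  have hXmem : (Polynomial.X : Polynomial R) ∈
      Ideal.span ({Polynomial.X, Polynomial.C c} : Set (Polynomial R)) :=
    Ideal.subset_span (by simp)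
  have hCmem : (Polynomial.C c : Polynomial R) ∈
      Ideal.span ({Polynomial.X, Polynomial.C c} : Set (Polynomial R)) :=
    Ideal.subset_span (by simp)
  have hgmem : g ∈ Ideal.span ({Polynomial.X, Polynomial.C c} : Set (Polynomial R)) := by
    rw [hg]; exact Ideal.mem_span_singleton_self g
  rw [hg, Ideal.mem_span_singleton] at hXmem hCmem
  obtain ⟨q, hq⟩ := hXmem
  obtain ⟨h, hh⟩ := hCmem
  -- map to k[X]
  set ψ : Polynomial R →+* Polynomial (O ⧸ Ideal.span ({πh} : Set O)) :=
    Polynomial.mapRingHom ρ with hψ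
  have hψg : ψ g * ψ q = Polynomial.X := by
    rw [← map_mul, ← hq]; simp [hψ]
  have hψgh : ψ g * ψ h = 0 := by
    rw [← map_mul, ← hh]; simp [hψ, hρc]
  have hψgne : ψ g ≠ 0 := by
    intro h0
    rw [h0, zero_mul] at hψg
    exact Polynomial.X_ne_zero hψg.symm
  have hψh : ψ h = 0 := by
    rcases mul_eq_zero.mp hψgh with h0 | h0
    · exact absurd h0 hψgne
    · exact h0
  -- hence C c divides h
  have hCdvd : Polynomial.C c ∣ h := by
    rw [Polynomial.C_dvd_iff_dvd_coeff]
    intro i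
    apply hker
    have := congrArg (fun p => Polynomial.coeff p i) hψh
    simpa [hψ, Polynomial.coeff_map] using this
  obtain ⟨h', rfl⟩ := hCdvd
  -- C c = g * C c * h', so c * (1 - g₀ h₀') = 0
  have key : c * (1 - g.coeff 0 * h'.coeff 0) = 0 := by
    have : (Polynomial.C c * (1 - g * h')).coeff 0 = 0 := by
      have : Polynomial.C c * (1 - g * h') = 0 := by
        linear_combination hh
      rw [this]; simp
    simpa [Polynomial.mul_coeff_zero, mul_sub] using this
  have hc1 : c ∣ 1 - g.coeff 0 * h'.coeff 0 := hann _ (by rw [mul_comm]; exact key)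
  -- c divides g.coeff 0
  have hcg : c ∣ g.coeff 0 := by
    obtain ⟨u, v, huv⟩ := Ideal.mem_span_pair.mp hgmem
    have := congrArg (fun p => Polynomial.coeff p 0) huv
    simp only [Polynomial.coeff_add, Polynomial.mul_coeff_zero,
      Polynomial.coeff_X_zero, mul_zero, Polynomial.coeff_C_zero, zero_add] at this
    exact ⟨v.coeff 0, by rw [← this]; ring⟩
  have hcone : c ∣ 1 := by
    have : c ∣ g.coeff 0 * h'.coeff 0 := hcg.mul_right _
    have := dvd_add hc1 this
    simpa using this
  -- contradiction: ρ c = 0 but c is a unit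
  have : (1 : O ⧸ Ideal.span ({πh} : Set O)) = 0 := by
    obtain ⟨w, hw⟩ := hcone
    have := congrArg ρ hw
    rw [map_one, map_mul, hρc, zero_mul] at this
    exact this
  exact one_ne_zero this

/-- In `A = O'[X,Y]/(XY - π)`, where `O'` is a discrete valuation ring with
uniformizer `π̂` and `π = π̂²`, the ideal `I = (X, π̂)` is not principal. -/
theorem ideal_X_pi_not_principal {O : Type*} [CommRing O] [IsDomain O]
    [IsDiscreteValuationRing O] (πh : O) (hπ : Irreducible πh) :
    ¬ (Ideal.span
        ({Ideal.Quotient.mk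
            (Ideal.span {(X 0 * X 1 - C (πh ^ 2) : MvPolynomial (Fin 2) O)}) (X 0),
          Ideal.Quotient.mk
            (Ideal.span {(X 0 * X 1 - C (πh ^ 2) : MvPolynomial (Fin 2) O)}) (C πh)} :
          Set (MvPolynomial (Fin 2) O ⧸
            Ideal.span {(X 0 * X 1 - C (πh ^ 2) : MvPolynomial (Fin 2) O)}))).IsPrincipal := by
  intro hprin
  set p : MvPolynomial (Fin 2) O := X 0 * X 1 - C (πh ^ 2) with hp
  set R := O ⧸ Ideal.span {πh ^ 2} with hR
  -- the ring hom MvPolynomial (Fin 2) O → R[T], X 0 ↦ T, X 1 ↦ 0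
  set f : MvPolynomial (Fin 2) O →+* Polynomial R :=
    MvPolynomial.eval₂Hom ((Polynomial.C : R →+* Polynomial R).comp
      (Ideal.Quotient.mk (Ideal.span {πh ^ 2})))
      (fun i => if i = 0 then Polynomial.X else 0) with hf
  have hfp : f p = 0 := by
    have hmk : Ideal.Quotient.mk (Ideal.span {πh ^ 2}) (πh ^ 2) = 0 :=
      Ideal.Quotient.eq_zero_iff_mem.mpr (Ideal.mem_span_singleton_self _)
    rw [hp, map_sub, map_mul, hf]
    rw [MvPolynomial.eval₂Hom_X', MvPolynomial.eval₂Hom_X', MvPolynomial.eval₂Hom_C]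
    rw [if_pos rfl, if_neg (by decide : ¬ (1 : Fin 2) = 0), mul_zero,
      RingHom.comp_apply, hmk, map_zero, sub_zero]
  -- descend to the quotient
  set φ : (MvPolynomial (Fin 2) O ⧸ Ideal.span {p}) →+* Polynomial R :=
    Ideal.Quotient.lift (Ideal.span {p}) f (by
      intro a ha
      rw [Ideal.mem_span_singleton] at ha
      obtain ⟨b, rfl⟩ := ha
      rw [map_mul, hfp, zero_mul]) with hφ
  obtain ⟨a, ha⟩ := hprin
  apply aux_not_principal πh (hπ.prime)
  have himg : Ideal.map φ (Ideal.span
      ({Ideal.Quotient.mk (Ideal.span {p}) (X 0),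
        Ideal.Quotient.mk (Ideal.span {p}) (C πh)} :
        Set (MvPolynomial (Fin 2) O ⧸ Ideal.span {p})))
      = Ideal.span ({Polynomial.X,
          Polynomial.C (Ideal.Quotient.mk (Ideal.span {πh ^ 2}) πh)} :
          Set (Polynomial R)) := by
    rw [Ideal.map_span]
    congr 1
    rw [Set.image_insert_eq, Set.image_singleton]
    have h1 : φ (Ideal.Quotient.mk (Ideal.span {p}) (X 0)) = Polynomial.X := by
      simp [hφ, hf]
    have h2 : φ (Ideal.Quotient.mk (Ideal.span {p}) (C πh)) =
        Polynomial.C (Ideal.Quotient.mk (Ideal.span {πh ^ 2}) πh) := by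
      simp [hφ, hf]
    rw [h1, h2]
  rw [Ideal.submodule_span_eq] at ha
  rw [← himg, ha, Ideal.map_span, Set.image_singleton]
  exact ⟨φ a, rfl⟩
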